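/- Let g ∈ L∞(μ) for a measure space (Ω, F, μ), 0 < p < ∞, and let T be the multiplication operator Tf = g·f on L_p(μ). If L_p(μ) is infinite dimensional, then T ⊕ T is not cyclic on L_p(μ) × L_p(μ). -/

import Mathlib

open MeasureTheory
open scoped ENNReal

private lemma aux_mul_ae_zero {Ω : Type*} [MeasurableSpace Ω] {μ : Measure Ω}
    {𝕜 : Type*} [RCLike 𝕜] {p : ℝ≥0∞} (hp₀ : 0 < p) (hp : p ≠ ∞)
    (h f u : Lp 𝕜 p μ)
    (hd : ∀ ε : ℝ≥0∞, 0 < ε → ∃ u' v' : Lp 𝕜 p μ,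
      (⇑h * ⇑u' : Ω → 𝕜) =ᵐ[μ] ⇑f * ⇑v' ∧
      eLpNorm (⇑(u' - u)) p μ < ε ∧ eLpNorm (⇑v') p μ < ε) :
    (⇑h * ⇑u : Ω → 𝕜) =ᵐ[μ] 0 := by
  set q : ℝ≥0∞ := p / 2 with hq
  have hq0 : q ≠ 0 := by
    rw [hq]
    intro hcon
    rcases ENNReal.div_eq_zero_iff.1 hcon with h' | h'
    · exact hp₀.ne' h'
    · norm_num at h'
  have hpqr : 1 / q = 1 / p + 1 / p := by
    rw [hq, one_div, ENNReal.inv_div (Or.inl (by norm_num)) (Or.inl (by norm_num)),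
      ENNReal.div_add_div_same, one_add_one_eq_two]
  -- Hölder
  have hold : ∀ a b : Lp 𝕜 p μ, ∀ w : Ω → 𝕜, w =ᵐ[μ] ⇑b →
      eLpNorm (⇑a * w) q μ ≤ eLpNorm (⇑a) p μ * eLpNorm (⇑b) p μ := by
    intro a b w hw
    have h1 : (⇑a * w : Ω → 𝕜) =ᵐ[μ] (⇑a • ⇑b : Ω → 𝕜) := by
      filter_upwards [hw] with ω hω
      simp [hω, smul_eq_mul]
    rw [eLpNorm_congr_ae h1]
    haveI : ENNReal.HolderTriple p p q := ⟨by simpa [one_div] using hpqr.symm⟩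
    exact eLpNorm_smul_le_mul_eLpNorm (Lp.aestronglyMeasurable b)
      (Lp.aestronglyMeasurable a)
  by_contra hne
  have hmeas : AEStronglyMeasurable (⇑h * ⇑u : Ω → 𝕜) μ :=
    (Lp.aestronglyMeasurable h).mul (Lp.aestronglyMeasurable u)
  have hA0 : eLpNorm (⇑h * ⇑u : Ω → 𝕜) q μ ≠ 0 := by
    intro h0
    exact hne ((eLpNorm_eq_zero_iff hmeas hq0).1 h0)
  set K : ℝ≥0∞ := ENNReal.LpAddConst q * (eLpNorm (⇑h) p μ + eLpNorm (⇑f) p μ) with hK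
  have hKtop : K ≠ ∞ := by
    refine (ENNReal.mul_lt_top (ENNReal.LpAddConst_lt_top q) ?_).ne
    exact ENNReal.add_lt_top.2 ⟨Lp.eLpNorm_lt_top h, Lp.eLpNorm_lt_top f⟩
  obtain ⟨n, hn, hnK⟩ := ENNReal.exists_nnreal_pos_mul_lt hKtop hA0
  have hεpos : (0 : ℝ≥0∞) < n := by exact_mod_cast hn
  obtain ⟨u', v', hrel, hu', hv'⟩ := hd n hεpos
  -- decompose h*u = h*(u - u') + f*v'  (a.e.)
  have hdecomp : (⇑h * ⇑u : Ω → 𝕜) =ᵐ[μ]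
      (⇑h * (⇑u - ⇑u') + ⇑f * ⇑v' : Ω → 𝕜) := by
    filter_upwards [hrel] with ω hω
    simp only [Pi.add_apply, Pi.mul_apply, Pi.sub_apply] at *
    rw [← hω]; ring
  have e1 : eLpNorm (⇑(u - u')) p μ = eLpNorm (⇑(u' - u)) p μ := by
    rw [show u - u' = -(u' - u) by abel, eLpNorm_congr_ae (Lp.coeFn_neg (u' - u)),
      eLpNorm_neg]
  have h1 : eLpNorm (⇑h * (⇑u - ⇑u') : Ω → 𝕜) q μ ≤ eLpNorm (⇑h) p μ * ↑n := by
    refine le_trans (hold h (u - u') _ (Lp.coeFn_sub u u').symm) ?_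
    rw [e1]
    exact mul_le_mul_right hu'.le _
  have h2 : eLpNorm (⇑f * ⇑v' : Ω → 𝕜) q μ ≤ eLpNorm (⇑f) p μ * ↑n := by
    refine le_trans (hold f v' _ Filter.EventuallyEq.rfl) ?_
    exact mul_le_mul_right hv'.le _
  have hlt : eLpNorm (⇑h * ⇑u : Ω → 𝕜) q μ < eLpNorm (⇑h * ⇑u : Ω → 𝕜) q μ := by
    calc eLpNorm (⇑h * ⇑u : Ω → 𝕜) q μ
        = eLpNorm (⇑h * (⇑u - ⇑u') + ⇑f * ⇑v' : Ω → 𝕜) q μ := eLpNorm_congr_ae hdecomp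
      _ ≤ ENNReal.LpAddConst q * (eLpNorm (⇑h * (⇑u - ⇑u') : Ω → 𝕜) q μ
            + eLpNorm (⇑f * ⇑v' : Ω → 𝕜) q μ) :=
          eLpNorm_add_le'
            ((Lp.aestronglyMeasurable h).mul
              ((Lp.aestronglyMeasurable u).sub (Lp.aestronglyMeasurable u')))
            ((Lp.aestronglyMeasurable f).mul (Lp.aestronglyMeasurable v')) q
      _ ≤ ENNReal.LpAddConst q * (eLpNorm (⇑h) p μ * ↑n + eLpNorm (⇑f) p μ * ↑n) :=
          mul_le_mul_right (add_le_add h1 h2) _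
      _ = ↑n * K := by rw [hK]; ring
      _ < _ := hnK
  exact lt_irrefl _ hlt

theorem stmt_17 (𝕜 : Type*) [RCLike 𝕜] {Ω : Type*} [MeasurableSpace Ω] (μ : Measure Ω)
    (p : ℝ≥0∞) (hp₀ : 0 < p) (hp : p ≠ ∞)
    [tL : TopologicalSpace (Lp 𝕜 p μ)]
    (htL : tL = TopologicalSpace.generateFrom
      {s : Set (Lp 𝕜 p μ) | ∃ (f : Lp 𝕜 p μ) (ε : ℝ≥0∞), 0 < ε ∧
        s = {h : Lp 𝕜 p μ | eLpNorm (⇑(h - f)) p μ < ε}})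
    (g : Ω → 𝕜) (hg : MemLp g ∞ μ)
    (T : Lp 𝕜 p μ →L[𝕜] Lp 𝕜 p μ)
    (hT : ∀ f : Lp 𝕜 p μ, ⇑(T f) =ᵐ[μ] fun ω => g ω * f ω)
    (hinf : ¬ FiniteDimensional 𝕜 (Lp 𝕜 p μ)) :
    ¬ ∃ v : Lp 𝕜 p μ × Lp 𝕜 p μ, Dense ((Submodule.span 𝕜
        {w : Lp 𝕜 p μ × Lp 𝕜 p μ | ∃ n : ℕ, w = ((T ^ n) v.1, (T ^ n) v.2)} :
          Submodule 𝕜 (Lp 𝕜 p μ × Lp 𝕜 p μ)) : Set (Lp 𝕜 p μ × Lp 𝕜 p μ)) := by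
  rintro ⟨v, hdense⟩
  -- balls are open and contain their center
  have hball : ∀ (a : Lp 𝕜 p μ) (ε : ℝ≥0∞), 0 < ε →
      IsOpen {y : Lp 𝕜 p μ | eLpNorm (⇑(y - a)) p μ < ε} := by
    intro a ε hε
    rw [htL]
    exact TopologicalSpace.isOpen_generateFrom_of_mem ⟨a, ε, hε, rfl⟩
  have hself : ∀ (a : Lp 𝕜 p μ) (ε : ℝ≥0∞), 0 < ε →
      a ∈ {y : Lp 𝕜 p μ | eLpNorm (⇑(y - a)) p μ < ε} := by
    intro a ε hε
    simp only [Set.mem_setOf_eq, sub_self]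
    rw [eLpNorm_congr_ae (Lp.coeFn_zero 𝕜 p μ), eLpNorm_zero]
    exact hε
  -- powers of T
  have hpow : ∀ (x : Lp 𝕜 p μ) (n : ℕ), ⇑((T ^ n) x) =ᵐ[μ] fun ω => g ω ^ n * x ω := by
    intro x n
    induction n with
    | zero =>
        simp only [pow_zero, ContinuousLinearMap.one_apply, one_mul]
        exact Filter.EventuallyEq.rfl
    | succ n ih =>
        have hstep : (T ^ (n + 1)) x = T ((T ^ n) x) := by
          rw [pow_succ']; rfl
        rw [hstep]
        filter_upwards [hT ((T ^ n) x), ih] with ω h1 h2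
        rw [h1, h2]; ring
  -- every element of the span satisfies the symmetry relation
  have hspan : ∀ w ∈ (Submodule.span 𝕜
      {w : Lp 𝕜 p μ × Lp 𝕜 p μ | ∃ n : ℕ, w = ((T ^ n) v.1, (T ^ n) v.2)}),
      (⇑v.2 * ⇑w.1 : Ω → 𝕜) =ᵐ[μ] ⇑v.1 * ⇑w.2 := by
    intro w hw
    induction hw using Submodule.span_induction with
    | mem x hx =>
        obtain ⟨n, rfl⟩ := hx
        filter_upwards [hpow v.1 n, hpow v.2 n] with ω h1 h2
        simp only [Pi.mul_apply, h1, h2]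
        ring
    | zero =>
        filter_upwards [Lp.coeFn_zero 𝕜 p μ] with ω hz
        show ⇑v.2 ω * ⇑(0 : Lp 𝕜 p μ) ω = ⇑v.1 ω * ⇑(0 : Lp 𝕜 p μ) ω
        simp only [hz, Pi.zero_apply, mul_zero]
    | add x y hx hy px py =>
        filter_upwards [px, py, Lp.coeFn_add x.1 y.1, Lp.coeFn_add x.2 y.2]
          with ω p1 p2 e1 e2
        simp only [Pi.mul_apply, Pi.add_apply] at *
        show v.2 ω * (x.1 + y.1) ω = v.1 ω * (x.2 + y.2) ω
        rw [e1, e2, mul_add, mul_add, p1, p2]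
    | smul c x hx px =>
        filter_upwards [px, Lp.coeFn_smul c x.1, Lp.coeFn_smul c x.2]
          with ω p1 e1 e2
        simp only [Pi.mul_apply] at *
        show v.2 ω * (c • x.1) ω = v.1 ω * (c • x.2) ω
        rw [e1, e2]
        simp only [Pi.smul_apply, smul_eq_mul]
        linear_combination c * p1
  -- v.2 annihilates everything
  have key1 : ∀ u : Lp 𝕜 p μ, (⇑v.2 * ⇑u : Ω → 𝕜) =ᵐ[μ] 0 := by
    intro u
    apply aux_mul_ae_zero hp₀ hp v.2 v.1 u
    intro ε hε
    obtain ⟨w, hwspan, hw⟩ := hdense.exists_mem_open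
      ((hball u ε hε).prod (hball 0 ε hε)) ⟨(u, 0), hself u ε hε, hself 0 ε hε⟩
    refine ⟨w.1, w.2, hspan w hwspan, hw.1, ?_⟩
    simpa using hw.2
  have key2 : ∀ u : Lp 𝕜 p μ, (⇑v.1 * ⇑u : Ω → 𝕜) =ᵐ[μ] 0 := by
    intro u
    apply aux_mul_ae_zero hp₀ hp v.1 v.2 u
    intro ε hε
    obtain ⟨w, hwspan, hw⟩ := hdense.exists_mem_open
      ((hball 0 ε hε).prod (hball u ε hε)) ⟨(0, u), hself 0 ε hε, hself u ε hε⟩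
    refine ⟨w.2, w.1, (hspan w hwspan).symm, hw.2, ?_⟩
    simpa using hw.1
  -- hence v.1 = 0 and v.2 = 0
  have hv2 : v.2 = 0 := by
    refine Lp.ext (Filter.EventuallyEq.trans ?_ (Lp.coeFn_zero 𝕜 p μ).symm)
    filter_upwards [key1 v.2] with ω hω
    simpa [mul_self_eq_zero] using hω
  have hv1 : v.1 = 0 := by
    refine Lp.ext (Filter.EventuallyEq.trans ?_ (Lp.coeFn_zero 𝕜 p μ).symm)
    filter_upwards [key2 v.1] with ω hω
    simpa [mul_self_eq_zero] using hω
  -- the span is trivial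
  have hbot : ∀ w ∈ (Submodule.span 𝕜
      {w : Lp 𝕜 p μ × Lp 𝕜 p μ | ∃ n : ℕ, w = ((T ^ n) v.1, (T ^ n) v.2)}),
      w = 0 := by
    intro w hw
    have hle : Submodule.span 𝕜
        {w : Lp 𝕜 p μ × Lp 𝕜 p μ | ∃ n : ℕ, w = ((T ^ n) v.1, (T ^ n) v.2)} ≤ ⊥ := by
      rw [Submodule.span_le]
      rintro x ⟨n, rfl⟩
      simp [hv1, hv2, Submodule.mem_bot, Prod.ext_iff]
    simpa using hle hw
  -- but Lp is nontrivial
  have hnt : ∃ x : Lp 𝕜 p μ, x ≠ 0 := by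
    by_contra hc
    push_neg at hc
    refine hinf ?_
    haveI : Subsingleton (Lp 𝕜 p μ) := ⟨fun a b => (hc a).trans (hc b).symm⟩
    infer_instance
  obtain ⟨x, hx⟩ := hnt
  have hxn : 0 < eLpNorm (⇑x) p μ := by
    rcases eq_or_ne (eLpNorm (⇑x) p μ) 0 with h0 | h0
    · exact absurd (Lp.ext (((eLpNorm_eq_zero_iff (Lp.aestronglyMeasurable x)
        hp₀.ne').1 h0).trans (Lp.coeFn_zero 𝕜 p μ).symm)) hx
    · exact pos_iff_ne_zero.2 h0
  obtain ⟨w, hwspan, hw⟩ := hdense.exists_mem_open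
    ((hball x _ hxn).prod isOpen_univ) ⟨(x, 0), hself x _ hxn, trivial⟩
  have hw0 := hbot w hwspan
  have hw1 : eLpNorm (⇑(w.1 - x)) p μ < eLpNorm (⇑x) p μ := hw.1
  rw [hw0] at hw1
  have : eLpNorm (⇑((0 : Lp 𝕜 p μ × Lp 𝕜 p μ).1 - x)) p μ = eLpNorm (⇑x) p μ := by
    show eLpNorm (⇑((0 : Lp 𝕜 p μ) - x)) p μ = _
    rw [zero_sub, eLpNorm_congr_ae (Lp.coeFn_neg x), eLpNorm_neg]
  rw [this] at hw1
  exact lt_irrefl _ hw1
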